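/- Let n ≥ 2, let S ⊂ ℝ^n be a Borel set with H^{n-1}(S) > 0, let A ∈ ℝ^{n×n} be antisymmetric (Aᵀ = −A) and c ∈ ℝ^n. If Ax = c for every x ∈ S, then A = 0 and c = 0. -/

import Mathlib

open MeasureTheory Filter Matrix

noncomputable def frobSq {n : ℕ} (X : Matrix (Fin n) (Fin n) ℝ) : ℝ := ∑ i, ∑ j, (X i j)^2
noncomputable def frob {n : ℕ} (X : Matrix (Fin n) (Fin n) ℝ) : ℝ := Real.sqrt (frobSq X)
noncomputable def msym {n : ℕ} (X : Matrix (Fin n) (Fin n) ℝ) : Matrix (Fin n) (Fin n) ℝ :=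
  (1/2 : ℝ) • (X + Xᵀ)
noncomputable def mdev {n : ℕ} (X : Matrix (Fin n) (Fin n) ℝ) : Matrix (Fin n) (Fin n) ℝ :=
  X - (X.trace / n) • (1 : Matrix (Fin n) (Fin n) ℝ)
noncomputable def mils {n : ℕ} (X : Matrix (Fin n) (Fin n) ℝ) : Matrix (Fin n) (Fin n) ℝ :=
  msym X - (X.trace / n) • (1 : Matrix (Fin n) (Fin n) ℝ)

/-- Matrix exponential, defined by its power series. -/
noncomputable def mexp {n : ℕ} (A : Matrix (Fin n) (Fin n) ℝ) : Matrix (Fin n) (Fin n) ℝ :=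
  ∑' k : ℕ, ((k.factorial : ℝ)⁻¹) • A ^ k

/-- The eigenvalues of a symmetric real matrix, listed in ascending order
(and junk value `0` if the matrix is not symmetric). -/
noncomputable def sortedEig {n : ℕ} (A : Matrix (Fin n) (Fin n) ℝ) : Fin n → ℝ :=
  if hA : A.IsHermitian then fun i => hA.eigenvalues (Tuple.sort hA.eigenvalues i) else 0

/-- The singular values of a real square matrix in ascending order. -/
noncomputable def singVals {n : ℕ} (X : Matrix (Fin n) (Fin n) ℝ) : Fin n → ℝ :=
  fun i => Real.sqrt (sortedEig (Xᵀ * X) i)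

/-- The Jacobian matrix of a map `ℝ^n → ℝ^n`. -/
noncomputable def jac {n : ℕ} (u : EuclideanSpace ℝ (Fin n) → EuclideanSpace ℝ (Fin n))
    (x : EuclideanSpace ℝ (Fin n)) : Matrix (Fin n) (Fin n) ℝ :=
  fun i j => fderiv ℝ u x (EuclideanSpace.single j 1) i

/-- An antisymmetric matrix that acts as a fixed constant on a set of positive `H^{n-1}`
measure vanishes (together with the constant). -/
theorem stmt2 (n : ℕ) (hn : 2 ≤ n) (S : Set (EuclideanSpace ℝ (Fin n)))
    (hSm : MeasurableSet S) (h0 : 0 < μH[(n : ℝ) - 1] S)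
    (A : Matrix (Fin n) (Fin n) ℝ) (c : EuclideanSpace ℝ (Fin n))
    (hA : Aᵀ = -A)
    (h : ∀ x ∈ S, Matrix.toEuclideanLin A x = c) :
    A = 0 ∧ c = 0 := by
  -- S is nonempty
  have hSne : S.Nonempty := by
    rw [Set.nonempty_iff_ne_empty]
    rintro rfl
    simp at h0
  obtain ⟨x₀, hx₀⟩ := hSne
  set L : EuclideanSpace ℝ (Fin n) →ₗ[ℝ] EuclideanSpace ℝ (Fin n) :=
    Matrix.toEuclideanLin A with hL
  -- antisymmetry of L w.r.t. the inner product
  have hadj : ∀ x y : EuclideanSpace ℝ (Fin n),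
      inner ℝ (L x) y = -(inner ℝ x (L y) : ℝ) := by
    intro x y
    have h1 : Matrix.toEuclideanLin (Aᴴ) = LinearMap.adjoint L :=
      Matrix.toEuclideanLin_conjTranspose_eq_adjoint A
    have h2 : (Aᴴ : Matrix (Fin n) (Fin n) ℝ) = -A := by
      rw [Matrix.conjTranspose_eq_transpose_of_trivial]; exact hA
    have h3 : LinearMap.adjoint L = -L := by
      rw [← h1, h2]; simp [hL]
    calc (inner ℝ (L x) y : ℝ) = inner ℝ x (LinearMap.adjoint L y) := by
          rw [LinearMap.adjoint_inner_right]
      _ = -(inner ℝ x (L y) : ℝ) := by rw [h3]; simp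
  by_cases hA0 : A = 0
  · subst hA0
    refine ⟨rfl, ?_⟩
    rw [← h x₀ hx₀, hL]
    simp
  · exfalso
    -- L ≠ 0, pick x with L x ≠ 0
    have hLne : ∃ x, L x ≠ 0 := by
      by_contra hc
      push_neg at hc
      apply hA0
      have hL0 : L = 0 := by ext x i; simp [hc]
      apply (Matrix.toEuclideanLin (𝕜 := ℝ) (m := Fin n) (n := Fin n)).injective
      rw [map_zero]
      simpa [hL] using hL0
    obtain ⟨x, hx⟩ := hLne
    -- L x and L (L x) are linearly independent
    have hIxLx : (inner ℝ x (L x) : ℝ) = 0 := by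
      have h1 := hadj x x
      have h2 : (inner ℝ (L x) x : ℝ) = inner ℝ x (L x) := real_inner_comm _ _
      linarith [h1, h2]
    have hIxLLx : (inner ℝ x (L (L x)) : ℝ) = -(‖L x‖ ^ 2) := by
      have h1 := hadj (L x) x
      have h2 : (inner ℝ (L x) x : ℝ) = inner ℝ x (L x) := real_inner_comm _ _
      have h3 : (inner ℝ (L (L x)) x : ℝ) = inner ℝ x (L (L x)) := real_inner_comm _ _
      have h4 : (inner ℝ (L x) (L x) : ℝ) = ‖L x‖ ^ 2 := real_inner_self_eq_norm_sq _
      have h5 := hadj x (L x)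
      linarith
    have hli : LinearIndependent ℝ ![L x, L (L x)] := by
      rw [LinearIndependent.pair_iff]
      intro s t hst
      have hinner : (inner ℝ x (s • L x + t • L (L x)) : ℝ) = 0 := by rw [hst]; simp
      rw [inner_add_right, real_inner_smul_right, real_inner_smul_right, hIxLx,
        hIxLLx] at hinner
      have hnormpos : (0 : ℝ) < ‖L x‖ ^ 2 := pow_pos (norm_pos_iff.mpr hx) 2
      have ht : t = 0 := by
        have : t * ‖L x‖ ^ 2 = 0 := by linarith
        rcases mul_eq_zero.1 this with h' | h'
        · exact h'
        · linarith
      subst ht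
      simp only [zero_smul, add_zero] at hst
      rcases smul_eq_zero.1 hst with h' | h'
      · exact ⟨h', rfl⟩
      · exact absurd h' hx
    -- rank L ≥ 2
    have hspan : Submodule.span ℝ {L x, L (L x)} ≤ LinearMap.range L := by
      rw [Submodule.span_le]
      rintro v (rfl | rfl)
      · exact ⟨x, rfl⟩
      · exact ⟨L x, rfl⟩
    have hfr_span : Module.finrank ℝ (Submodule.span ℝ {L x, L (L x)}) = 2 := by
      have hset : ({L x, L (L x)} : Set (EuclideanSpace ℝ (Fin n)))
          = Set.range ![L x, L (L x)] := by
        simp [Matrix.range_cons, Matrix.range_empty, Set.pair_comm]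
      rw [hset, finrank_span_eq_card hli]
      simp
    have hrank2 : 2 ≤ Module.finrank ℝ (LinearMap.range L) := by
      rw [← hfr_span]
      exact Submodule.finrank_mono hspan
    -- dim ker ≤ n - 2
    have hrn : Module.finrank ℝ (LinearMap.range L)
        + Module.finrank ℝ (LinearMap.ker L) = n := by
      rw [LinearMap.finrank_range_add_finrank_ker L]
      simp [finrank_euclideanSpace]
    have hker : Module.finrank ℝ (LinearMap.ker L) ≤ n - 2 := by omega
    -- S ⊆ x₀ + ker L
    have hsub : ∀ y ∈ S, y - x₀ ∈ LinearMap.ker L := by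
      intro y hy
      rw [LinearMap.mem_ker, map_sub, h y hy, h x₀ hx₀, sub_self]
    -- translation-inclusion map from ker L
    set K := LinearMap.ker L with hK
    set g : K → EuclideanSpace ℝ (Fin n) := fun k => x₀ + (k : EuclideanSpace ℝ (Fin n))
      with hg
    have hgiso : Isometry g := by
      apply Isometry.of_dist_eq
      intro k₁ k₂
      simp only [hg, dist_add_left]
      rfl
    have hS_sub : S ⊆ Set.range g := by
      intro y hy
      exact ⟨⟨y - x₀, hsub y hy⟩, by simp [hg]⟩
    -- dimH S ≤ finrank ker
    have hdimH : dimH S ≤ (Module.finrank ℝ K : ENNReal) := by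
      calc dimH S ≤ dimH (Set.range g) := dimH_mono hS_sub
        _ = dimH (g '' Set.univ) := by rw [Set.image_univ]
        _ ≤ dimH (Set.univ : Set K) := hgiso.lipschitz.dimH_image_le _
        _ = (Module.finrank ℝ K : ENNReal) := Real.dimH_univ_eq_finrank (↥K)
    -- conclude measure zero
    have hlt : dimH S < ((n - 1 : ℕ) : NNReal) := by
      refine hdimH.trans_lt ?_
      have : Module.finrank ℝ K < n - 1 := by omega
      rw [ENNReal.coe_natCast]
      exact_mod_cast this
    have hzero : μH[((n - 1 : ℕ) : NNReal)] S = 0 := hausdorffMeasure_of_dimH_lt hlt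
    have hcast : (((n - 1 : ℕ) : NNReal) : ℝ) = (n : ℝ) - 1 := by
      have h1 : (1 : ℕ) ≤ n := by omega
      rw [NNReal.coe_natCast, Nat.cast_sub h1, Nat.cast_one]
    rw [hcast] at hzero
    rw [hzero] at h0
    exact lt_irrefl 0 h0
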